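/- arXiv:2004.12600 — 4 statements merged into one kernel-verified Lean document; each statement's English description precedes it below -/
import Mathlib

section
/- Fix an integer k. Let B_k be the poset of pairs (n,m) ∈ ℤ × ℤ with n + m ≥ k, and let A_k ⊆ B_k be the full subposet of pairs with k ≤ n + m ≤ k + 1, both equipped with the order (n,m) ⪯ (n',m') if and only if n' ≤ n and m' ≤ m. Then the inclusion functor from the poset category of A_k to the poset category of B_k is a final (colimit-cofinal) functor. -/
open CategoryTheory

/-- The poset `B_k` of pairs `(n,m) ∈ ℤ × ℤ` with `n + m ≥ k`. -/
def MayIndexB (k : ℤ) : Type := {p : ℤ × ℤ // k ≤ p.1 + p.2}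

/-- The poset `A_k` of pairs `(n,m) ∈ ℤ × ℤ` with `k ≤ n + m ≤ k + 1`. -/
def MayIndexA (k : ℤ) : Type := {p : ℤ × ℤ // k ≤ p.1 + p.2 ∧ p.1 + p.2 ≤ k + 1}

/-- The order `(n,m) ⪯ (n',m')` iff `n' ≤ n` and `m' ≤ m` (opposite of componentwise). -/
instance (k : ℤ) : Preorder (MayIndexB k) where
  le x y := y.1.1 ≤ x.1.1 ∧ y.1.2 ≤ x.1.2
  le_refl x := ⟨le_refl _, le_refl _⟩
  le_trans x y z h₁ h₂ := ⟨h₂.1.trans h₁.1, h₂.2.trans h₁.2⟩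

instance (k : ℤ) : Preorder (MayIndexA k) where
  le x y := y.1.1 ≤ x.1.1 ∧ y.1.2 ≤ x.1.2
  le_refl x := ⟨le_refl _, le_refl _⟩
  le_trans x y z h₁ h₂ := ⟨h₂.1.trans h₁.1, h₂.2.trans h₁.2⟩

/-- The inclusion functor `A_k ⥤ B_k`. -/
def mayIncl (k : ℤ) : MayIndexA k ⥤ MayIndexB k :=
  Monotone.functor (f := fun x => (⟨x.1, x.2.1⟩ : MayIndexB k)) (fun _ _ h => h)

/-- Element constructor for `A_k`. -/
def mayElemA (k : ℤ) (p q : ℤ) (h1 : k ≤ p + q) (h2 : p + q ≤ k + 1) : MayIndexA k :=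
  ⟨(p, q), h1, h2⟩

/-- A morphism in `A_k` from componentwise comparison. -/
def mayHomA {k : ℤ} {x y : MayIndexA k} (h1 : y.1.1 ≤ x.1.1) (h2 : y.1.2 ≤ x.1.2) :
    x ⟶ y := ⟨⟨⟨h1, h2⟩⟩⟩

/-- A morphism in `B_k` from componentwise comparison. -/
def mayHomB {k : ℤ} {x y : MayIndexB k} (h1 : y.1.1 ≤ x.1.1) (h2 : y.1.2 ≤ x.1.2) :
    x ⟶ y := ⟨⟨⟨h1, h2⟩⟩⟩

/-- A structured-arrow object over `b` from an element `(p,q)` of `A_k` with `(p,q) ≤ b`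
componentwise. -/
def mayMkObj (k : ℤ) (b : MayIndexB k) (p q : ℤ) (h1 : k ≤ p + q) (h2 : p + q ≤ k + 1)
    (hp : p ≤ b.1.1) (hq : q ≤ b.1.2) : StructuredArrow b (mayIncl k) :=
  StructuredArrow.mk (T := mayIncl k) (Y := mayElemA k p q h1 h2)
    (mayHomB (y := (mayIncl k).obj (mayElemA k p q h1 h2)) hp hq)

/-- A morphism between such structured-arrow objects, whenever the targets compare
componentwise. -/
def mayMkHom (k : ℤ) (b : MayIndexB k) {p q p' q' : ℤ} {h1 h2 hp hq h1' h2' hp' hq'}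
    (e1 : p' ≤ p) (e2 : q' ≤ q) :
    mayMkObj k b p q h1 h2 hp hq ⟶ mayMkObj k b p' q' h1' h2' hp' hq' :=
  StructuredArrow.homMk
    (mayHomA (x := mayElemA k p q h1 h2) (y := mayElemA k p' q' h1' h2') e1 e2) rfl

open Relation

lemma mayDiag (k : ℤ) (b : MayIndexB k) (j : ℕ) : ∀ (p n : ℤ) (hpn : p + j = n)
    (hn : n ≤ b.1.1) (hp : k - p ≤ b.1.2),
    Zigzag (mayMkObj k b p (k - p) (by omega) (by omega) (by omega) hp)
      (mayMkObj k b n (k - n) (by omega) (by omega) hn (by omega)) := by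
  induction j with
  | zero =>
    intro p n hpn hn hp
    have : p = n := by omega
    subst this
    exact ReflTransGen.refl
  | succ j ih =>
    intro p n hpn hn hp
    have hpn' : p ≤ b.1.1 := by omega
    have hp1 : p + 1 ≤ b.1.1 := by omega
    -- midpoint (p+1, k-p), endpoint of the step (p+1, k-(p+1))
    have zag1 : Zag (mayMkObj k b p (k - p) (by omega) (by omega) (by omega) hp)
        (mayMkObj k b (p + 1) (k - p) (by omega) (by omega) hp1 hp) :=
      Or.inr ⟨mayMkHom k b (by omega) le_rfl⟩
    have zag2 : Zag (mayMkObj k b (p + 1) (k - p) (by omega) (by omega) hp1 hp)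
        (mayMkObj k b (p + 1) (k - (p + 1)) (by omega) (by omega) hp1 (by omega)) :=
      Or.inl ⟨mayMkHom k b le_rfl (by omega)⟩
    exact ReflTransGen.head zag1 (ReflTransGen.head zag2
      (ih (p + 1) n (by omega) hn (by omega)))

/-- The inclusion `A_k ⊆ B_k` is a final (colimit-cofinal) functor. -/
theorem mayIncl_final (k : ℤ) : (mayIncl k).Final := by
  constructor
  intro b
  have hb2 := b.2
  haveI : Nonempty (StructuredArrow b (mayIncl k)) :=
    ⟨mayMkObj k b b.1.1 (k - b.1.1) (by omega) (by omega) le_rfl (by omega)⟩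
  apply zigzag_isConnected
  have key : ∀ X : StructuredArrow b (mayIncl k),
      Zigzag X (mayMkObj k b b.1.1 (k - b.1.1) (by omega) (by omega) le_rfl (by omega)) := by
    intro X
    have hle : b ≤ (mayIncl k).obj X.right := leOfHom X.hom
    have hp : X.right.1.1 ≤ b.1.1 := hle.1
    have hq : X.right.1.2 ≤ b.1.2 := hle.2
    have hA := X.right.2
    have step : Zag X
        (mayMkObj k b X.right.1.1 (k - X.right.1.1) (by omega) (by omega) hp (by omega)) :=
      Or.inl ⟨StructuredArrow.homMk
        (mayHomA (x := X.right) (y := mayElemA k X.right.1.1 (k - X.right.1.1)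
          (by omega) (by omega)) le_rfl (show k - X.right.1.1 ≤ X.right.1.2 by omega)) rfl⟩
    exact ReflTransGen.head step
      (mayDiag k b (b.1.1 - X.right.1.1).toNat X.right.1.1 b.1.1 (by omega) le_rfl (by omega))
  intro X Y
  exact (key X).trans (zigzag_symmetric.symm _ _ (key Y))
end

section
/- Let (C, ⊗, 𝟙) be a cocomplete symmetric monoidal category in which the tensor product preserves colimits separately in each variable. For n ∈ ℕ let S(n) ∈ Fun(ℕᵒᵖ, C) denote the tower whose value at k is the monoidal unit 𝟙 for k ≤ n and the initial object of C for k > n, with identity structure maps between the copies of 𝟙. Then for all n, m ∈ ℕ there is an isomorphism S(n) ⊛ S(m) ≅ S(n+m), where ⊛ denotes Day convolution. -/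
open CategoryTheory CategoryTheory.Limits MonoidalCategory

universe v u

variable (C : Type u) [Category.{v} C]

noncomputable def stepObj [HasInitial C] (X : C) (n : ℕ) (k : ℕᵒᵈ) : C :=
  if OrderDual.ofDual k ≤ n then X else ⊥_ C

theorem stepObj_pos [HasInitial C] (X : C) (n : ℕ) {k : ℕᵒᵈ} (h : OrderDual.ofDual k ≤ n) :
    stepObj C X n k = X := if_pos h

theorem stepObj_neg [HasInitial C] (X : C) (n : ℕ) {k : ℕᵒᵈ} (h : ¬ OrderDual.ofDual k ≤ n) :
    stepObj C X n k = ⊥_ C := if_neg h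

noncomputable def stepMap [HasInitial C] (X : C) (n : ℕ) {k l : ℕᵒᵈ} (f : k ⟶ l) :
    stepObj C X n k ⟶ stepObj C X n l :=
  if h : OrderDual.ofDual k ≤ n then
    eqToHom (by
      rw [stepObj_pos C X n h,
        stepObj_pos C X n ((leOfHom f : OrderDual.ofDual l ≤ OrderDual.ofDual k).trans h)])
  else
    eqToHom (stepObj_neg C X n h) ≫ initial.to _

theorem stepMap_id [HasInitial C] (X : C) (n : ℕ) (k : ℕᵒᵈ) :
    stepMap C X n (𝟙 k) = 𝟙 (stepObj C X n k) := by
  unfold stepMap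
  by_cases h : OrderDual.ofDual k ≤ n
  · rw [dif_pos h]; simp
  · rw [dif_neg h, ← cancel_epi (eqToHom (stepObj_neg C X n h).symm)]
    apply Subsingleton.elim

theorem stepMap_comp [HasInitial C] (X : C) (n : ℕ) {k l m : ℕᵒᵈ} (f : k ⟶ l) (g : l ⟶ m) :
    stepMap C X n (f ≫ g) = stepMap C X n f ≫ stepMap C X n g := by
  unfold stepMap
  by_cases hk : OrderDual.ofDual k ≤ n
  · have hl : OrderDual.ofDual l ≤ n :=
      (leOfHom f : OrderDual.ofDual l ≤ OrderDual.ofDual k).trans hk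
    rw [dif_pos hk, dif_pos hk, dif_pos hl]
    simp
  · rw [dif_neg hk, dif_neg hk, ← cancel_epi (eqToHom (stepObj_neg C X n hk).symm)]
    apply Subsingleton.elim

/-- The tower `S(n)` with value `X` in degrees `≤ n` (identity structure maps) and the
initial object in degrees `> n`. -/
noncomputable def stepTower [HasInitial C] (X : C) (n : ℕ) : ℕᵒᵈ ⥤ C where
  obj := stepObj C X n
  map := stepMap C X n
  map_id := stepMap_id C X n
  map_comp := stepMap_comp C X n

/-- The monoidal product (addition) `ℕᵒᵖ × ℕᵒᵖ ⥤ ℕᵒᵖ`. -/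
def addFunctor : ℕᵒᵈ × ℕᵒᵈ ⥤ ℕᵒᵈ where
  obj p := OrderDual.toDual (OrderDual.ofDual p.1 + OrderDual.ofDual p.2)
  map {x y} f := homOfLE (OrderDual.toDual_le_toDual.mpr
    (Nat.add_le_add (leOfHom f.1 : OrderDual.ofDual y.1 ≤ OrderDual.ofDual x.1)
      (leOfHom f.2 : OrderDual.ofDual y.2 ≤ OrderDual.ofDual x.2)))
  map_id _ := by dsimp; apply Subsingleton.elim
  map_comp _ _ := by dsimp; apply Subsingleton.elim

/-- The Day convolution of two towers: the left Kan extension of the external tensor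
product `(n,m) ↦ X(n) ⊗ Y(m)` along addition, so that
`(X ⊛ Y)(k) = colim_{n+m ≥ k} X(n) ⊗ Y(m)`. -/
noncomputable def day [MonoidalCategory C] [HasColimits C] (X Y : ℕᵒᵈ ⥤ C) : ℕᵒᵈ ⥤ C :=
  Functor.leftKanExtension addFunctor (X.prod Y ⋙ MonoidalCategory.tensor C)

section DayAux

variable [MonoidalCategory C] [HasColimits C]
  [∀ X : C, PreservesColimits (tensorLeft X)] [∀ X : C, PreservesColimits (tensorRight X)]
  (n m : ℕ)

theorem stepMap_good [HasInitial C] (X : C) (N : ℕ) {k l : ℕᵒᵈ} (f : k ⟶ l)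
    (h : OrderDual.ofDual k ≤ N) :
    stepMap C X N f = eqToHom (by
      rw [stepObj_pos C X N h,
        stepObj_pos C X N ((leOfHom f : OrderDual.ofDual l ≤ OrderDual.ofDual k).trans h)]) :=
  dif_pos h

theorem tensor_eqToHom {X X' Y Y' : C} (h : X = X') (h' : Y = Y') :
    (eqToHom h ⊗ₘ eqToHom h') = eqToHom (by rw [h, h']) := by
  subst h; subst h'; simp

/-- The external tensor product of the two step towers. -/
noncomputable def dayDiag : ℕᵒᵈ × ℕᵒᵈ ⥤ C :=
  (stepTower C (𝟙_ C) n).prod (stepTower C (𝟙_ C) m) ⋙ MonoidalCategory.tensor C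

theorem dayDiag_obj_good (p : ℕᵒᵈ × ℕᵒᵈ) (h1 : OrderDual.ofDual p.1 ≤ n)
    (h2 : OrderDual.ofDual p.2 ≤ m) :
    (dayDiag C n m).obj p = 𝟙_ C ⊗ 𝟙_ C := by
  dsimp [dayDiag, stepTower, MonoidalCategory.tensor]
  rw [stepObj_pos C _ n h1, stepObj_pos C _ m h2]

/-- Outside the good region the external tensor product is initial. -/
noncomputable def isInitialBad (p : ℕᵒᵈ × ℕᵒᵈ)
    (h : ¬ (OrderDual.ofDual p.1 ≤ n ∧ OrderDual.ofDual p.2 ≤ m)) :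
    IsInitial ((dayDiag C n m).obj p) := by
  by_cases h1 : OrderDual.ofDual p.1 ≤ n
  case neg =>
    exact (initialIsInitial.isInitialObj (tensorRight ((stepTower C (𝟙_ C) m).obj p.2))
      (⊥_ C)).ofIso (eqToIso (by
        dsimp [dayDiag, stepTower, MonoidalCategory.tensor, tensorRight]
        rw [stepObj_neg C _ n h1]))
  case pos =>
    have h2 : ¬ OrderDual.ofDual p.2 ≤ m := fun h2 => h ⟨h1, h2⟩
    exact (initialIsInitial.isInitialObj (tensorLeft ((stepTower C (𝟙_ C) n).obj p.1))
      (⊥_ C)).ofIso (eqToIso (by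
        dsimp [dayDiag, stepTower, MonoidalCategory.tensor, tensorLeft]
        rw [stepObj_neg C _ m h2]))
  /- exact (initialIsInitial.isInitialObj (tensorRight ((stepTower C (𝟙_ C) m).obj p.2))
      (⊥_ C)).ofIso (eqToIso (by
        dsimp [dayDiag, stepTower, MonoidalCategory.tensor, tensorRight]
        rw [stepObj_neg C _ n h]))
  · exact (initialIsInitial.isInitialObj (tensorLeft ((stepTower C (𝟙_ C) n).obj p.1))
      (⊥_ C)).ofIso (eqToIso (by
        dsimp [dayDiag, stepTower, MonoidalCategory.tensor, tensorLeft]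
        rw [stepObj_neg C _ m h]))-/

/-- The component of the comparison natural transformation. -/
noncomputable def dayUnitApp (p : ℕᵒᵈ × ℕᵒᵈ) :
    (dayDiag C n m).obj p ⟶ (stepTower C (𝟙_ C) (n + m)).obj (addFunctor.obj p) :=
  if h : OrderDual.ofDual p.1 ≤ n ∧ OrderDual.ofDual p.2 ≤ m then
    eqToHom (dayDiag_obj_good C n m p h.1 h.2) ≫ (λ_ (𝟙_ C)).hom ≫
      eqToHom (stepObj_pos C (𝟙_ C) (n + m) (Nat.add_le_add h.1 h.2)).symm
  else (isInitialBad C n m p h).to _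

/-- The comparison natural transformation exhibiting `S(n+m)` as the Day convolution. -/
noncomputable def dayUnit : dayDiag C n m ⟶ addFunctor ⋙ stepTower C (𝟙_ C) (n + m) where
  app := dayUnitApp C n m
  naturality p q f := by
    by_cases hp : OrderDual.ofDual p.1 ≤ n ∧ OrderDual.ofDual p.2 ≤ m
    · have hq : OrderDual.ofDual q.1 ≤ n ∧ OrderDual.ofDual q.2 ≤ m :=
        ⟨((leOfHom f.1 : OrderDual.ofDual q.1 ≤ OrderDual.ofDual p.1)).trans hp.1,
         ((leOfHom f.2 : OrderDual.ofDual q.2 ≤ OrderDual.ofDual p.2)).trans hp.2⟩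
      have hD : (dayDiag C n m).map f =
          stepMap C (𝟙_ C) n f.1 ⊗ₘ stepMap C (𝟙_ C) m f.2 := rfl
      have hT : (addFunctor ⋙ stepTower C (𝟙_ C) (n + m)).map f =
          stepMap C (𝟙_ C) (n + m) (addFunctor.map f) := rfl
      rw [hD, hT, dayUnitApp, dayUnitApp, dif_pos hp, dif_pos hq,
        stepMap_good C _ n f.1 hp.1, stepMap_good C _ m f.2 hp.2,
        stepMap_good C _ (n + m) (addFunctor.map f) (Nat.add_le_add hp.1 hp.2),
        tensor_eqToHom]
      simp
      erw [eqToHom_trans_assoc, Category.assoc, Category.assoc, eqToHom_trans]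
    · exact (isInitialBad C n m p hp).hom_ext _ _

/-- The canonical object `(n, m)` of the comma category, when `k ≤ n + m`. -/
noncomputable def obj₀ (k : ℕᵒᵈ) (hk : OrderDual.ofDual k ≤ n + m) :
    CostructuredArrow addFunctor k :=
  CostructuredArrow.mk (Y := (OrderDual.toDual n, OrderDual.toDual m))
    (homOfLE (show OrderDual.toDual (n + m) ≤ k from hk))

theorem dayDiag_map_good {p q : ℕᵒᵈ × ℕᵒᵈ} (f : p ⟶ q) (h1 : OrderDual.ofDual p.1 ≤ n)
    (h2 : OrderDual.ofDual p.2 ≤ m) :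
    (dayDiag C n m).map f = eqToHom (by
      rw [dayDiag_obj_good C n m p h1 h2, dayDiag_obj_good C n m q
        ((leOfHom f.1 : OrderDual.ofDual q.1 ≤ OrderDual.ofDual p.1).trans h1)
        ((leOfHom f.2 : OrderDual.ofDual q.2 ≤ OrderDual.ofDual p.2).trans h2)]) := by
  have h0 : (dayDiag C n m).map f =
      (stepMap C (𝟙_ C) n f.1 ⊗ₘ stepMap C (𝟙_ C) m f.2) := rfl
  rw [h0, stepMap_good C _ n f.1 h1, stepMap_good C _ m f.2 h2, tensor_eqToHom]
  rfl

theorem dayUnitApp_pos (p : ℕᵒᵈ × ℕᵒᵈ)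
    (h : OrderDual.ofDual p.1 ≤ n ∧ OrderDual.ofDual p.2 ≤ m) :
    dayUnitApp C n m p = eqToHom (dayDiag_obj_good C n m p h.1 h.2) ≫ (λ_ (𝟙_ C)).hom ≫
      eqToHom (stepObj_pos C (𝟙_ C) (n + m) (k := addFunctor.obj p)
        (Nat.add_le_add h.1 h.2)).symm :=
  dif_pos h

theorem isIso_dayUnitApp (p : ℕᵒᵈ × ℕᵒᵈ)
    (h : OrderDual.ofDual p.1 ≤ n ∧ OrderDual.ofDual p.2 ≤ m) :
    IsIso (dayUnitApp C n m p) := by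
  have hI : IsIso (eqToHom (dayDiag_obj_good C n m p h.1 h.2) ≫ (λ_ (𝟙_ C)).hom ≫
      eqToHom (stepObj_pos C (𝟙_ C) (n + m) (k := addFunctor.obj p)
        (Nat.add_le_add h.1 h.2)).symm) := inferInstance
  rw [dayUnitApp_pos C n m p h]
  exact hI

theorem isIso_stepTower_map (N : ℕ) {k l : ℕᵒᵈ} (f : k ⟶ l) (h : OrderDual.ofDual k ≤ N) :
    IsIso ((stepTower C (𝟙_ C) N).map f) := by
  have hI : IsIso (stepMap C (𝟙_ C) N f) := by
    rw [stepMap_good C _ N f h]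
    infer_instance
  exact hI

theorem isIso_coconeAt_ι (k : ℕᵒᵈ) (j : CostructuredArrow addFunctor k)
    (hj : OrderDual.ofDual j.left.1 ≤ n ∧ OrderDual.ofDual j.left.2 ≤ m) :
    IsIso (((Functor.LeftExtension.mk (stepTower C (𝟙_ C) (n + m)) (dayUnit C n m)).coconeAt k).ι.app j) := by
  have h1 := isIso_dayUnitApp C n m j.left hj
  have h2 := isIso_stepTower_map C (n + m) j.hom (Nat.add_le_add hj.1 hj.2)
  exact (IsIso.comp_isIso : IsIso (dayUnitApp C n m j.left ≫
    (stepTower C (𝟙_ C) (n + m)).map j.hom))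

/-- When `k ≤ n + m`, the cocone at `k` is colimit: the comma category contains `(n, m)`. -/
noncomputable def isColimitGood (k : ℕᵒᵈ) (hk : OrderDual.ofDual k ≤ n + m) :
    IsColimit ((Functor.LeftExtension.mk (stepTower C (𝟙_ C) (n + m))
      (dayUnit C n m)).coconeAt k) where
  desc c :=
    haveI := isIso_coconeAt_ι C n m k (obj₀ n m k hk) ⟨le_rfl, le_rfl⟩
    inv (((Functor.LeftExtension.mk (stepTower C (𝟙_ C) (n + m)) (dayUnit C n m)).coconeAt k).ι.app (obj₀ n m k hk)) ≫ c.ι.app (obj₀ n m k hk)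
  fac c j := by
    haveI := isIso_coconeAt_ι C n m k (obj₀ n m k hk) ⟨le_rfl, le_rfl⟩
    by_cases hj : OrderDual.ofDual j.left.1 ≤ n ∧ OrderDual.ofDual j.left.2 ≤ m
    · let φ : obj₀ n m k hk ⟶ j :=
        CostructuredArrow.homMk
          (homOfLE (show OrderDual.toDual n ≤ j.left.1 from hj.1),
           homOfLE (show OrderDual.toDual m ≤ j.left.2 from hj.2))
          (Subsingleton.elim _ _)
      haveI : IsIso ((CostructuredArrow.proj addFunctor k ⋙ dayDiag C n m).map φ) := by
        have hI : IsIso ((dayDiag C n m).map φ.left) := by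
          rw [dayDiag_map_good C n m φ.left le_rfl le_rfl]
          infer_instance
        exact hI
      rw [← cancel_epi ((CostructuredArrow.proj addFunctor k ⋙ dayDiag C n m).map φ),
        ((Functor.LeftExtension.mk (stepTower C (𝟙_ C) (n + m))
          (dayUnit C n m)).coconeAt k).w_assoc φ, c.w φ, IsIso.hom_inv_id_assoc]
    · exact (isInitialBad C n m j.left hj).hom_ext _ _
  uniq c f hf := by
    haveI := isIso_coconeAt_ι C n m k (obj₀ n m k hk) ⟨le_rfl, le_rfl⟩
    rw [← cancel_epi (((Functor.LeftExtension.mk (stepTower C (𝟙_ C) (n + m)) (dayUnit C n m)).coconeAt k).ι.app (obj₀ n m k hk)), hf, IsIso.hom_inv_id_assoc]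

/-- When `k > n + m`, every object of the comma category has initial value, and
the cocone with initial point is colimit. -/
noncomputable def isColimitBad (k : ℕᵒᵈ) (hk : ¬ OrderDual.ofDual k ≤ n + m) :
    IsColimit ((Functor.LeftExtension.mk (stepTower C (𝟙_ C) (n + m))
      (dayUnit C n m)).coconeAt k) where
  desc c := eqToHom (stepObj_neg C (𝟙_ C) (n + m) hk) ≫ initial.to c.pt
  fac c j := by
    refine (isInitialBad C n m j.left ?_).hom_ext _ _
    rintro ⟨h1, h2⟩
    exact hk ((leOfHom j.hom : OrderDual.ofDual k ≤ _).trans (Nat.add_le_add h1 h2))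
  uniq c f hf := by
    rw [← cancel_epi (eqToHom (show (⊥_ C) =
      ((Functor.LeftExtension.mk (stepTower C (𝟙_ C) (n + m)) (dayUnit C n m)).coconeAt k).pt from
        (stepObj_neg C (𝟙_ C) (n + m) hk).symm))]
    apply Subsingleton.elim

end DayAux


/-- `S(n) ⊛ S(m) ≅ S(n+m)`: the Day convolution of the towers which are the unit `𝟙` in
degrees `≤ n` (resp. `≤ m`) and initial above. -/
theorem day_stepTower_iso [MonoidalCategory C] [SymmetricCategory C] [HasColimits C]
    [∀ X : C, PreservesColimits (tensorLeft X)] [∀ X : C, PreservesColimits (tensorRight X)]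
    (n m : ℕ) :
    Nonempty (day C (stepTower C (𝟙_ C) n) (stepTower C (𝟙_ C) m) ≅
      stepTower C (𝟙_ C) (n + m)) := by
  have hpt : (Functor.LeftExtension.mk (stepTower C (𝟙_ C) (n + m))
      (dayUnit C n m)).IsPointwiseLeftKanExtension := fun k => by
    by_cases hk : OrderDual.ofDual k ≤ n + m
    · exact isColimitGood C n m k hk
    · exact isColimitBad C n m k hk
  haveI : (stepTower C (𝟙_ C) (n + m)).IsLeftKanExtension
      (F := (stepTower C (𝟙_ C) n).prod (stepTower C (𝟙_ C) m) ⋙ MonoidalCategory.tensor C) (dayUnit C n m) :=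
    hpt.isLeftKanExtension
  exact ⟨Functor.leftKanExtensionUnique _
    (Functor.leftKanExtensionUnit addFunctor _) _ (dayUnit C n m)⟩
end

section
/- Let C be a category admitting pushouts and all wide pushouts. Suppose given a pushout square in C with horizontal maps f : X → Y and f' : X' → Y' and left vertical map φ : X → X' (so Y' ≅ Y ⊔_X X'). Then for every n ≥ 0 the canonical morphism Cⁿ(f) ⊔_X X' → Cⁿ(f'), from the pushout along φ of the n-th term of the Čech conerve of f to the n-th term of the Čech conerve of f', is an isomorphism, and these isomorphisms are compatible with all coface and codegeneracy maps; that is, the base change along φ of the Čech conerve of f is the Čech conerve of f'. -/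
open CategoryTheory CategoryTheory.Limits

universe v u

set_option maxRecDepth 8000

/-- Given a pushout square with horizontal maps `f : X ⟶ Y`, `f' : X' ⟶ Y'` and vertical
maps `φ : X ⟶ X'`, `ψ : Y ⟶ Y'`, for every `n` the square formed by the head map
`X ⟶ Cⁿ(f)`, the map `φ`, the induced map `Cⁿ(f) ⟶ Cⁿ(f')` of Čech conerves, and the head
map `X' ⟶ Cⁿ(f')` is again a pushout: the base change along `φ` of the Čech conerve of `f`
is the Čech conerve of `f'` (compatibly with all cofaces and codegeneracies, since the
comparison maps are the components of the functorial map of Čech conerves). -/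
theorem cechConerve_base_change (C : Type u) [Category.{v} C]
    [HasPushouts C] [HasWidePushouts.{0} C]
    {X Y X' Y' : C} (f : X ⟶ Y) (φ : X ⟶ X') (ψ : Y ⟶ Y') (f' : X' ⟶ Y')
    (h : IsPushout f φ ψ f') (n : SimplexCategory) :
    IsPushout
      (WidePushout.head _ : X ⟶ (Arrow.mk f).cechConerve.obj n)
      φ
      ((CosimplicialObject.cechConerve.map
        (Arrow.homMk φ ψ h.w.symm : Arrow.mk f ⟶ Arrow.mk f')).app n)
      (WidePushout.head _ : X' ⟶ (Arrow.mk f').cechConerve.obj n) := by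
  have w : CommSq (WidePushout.head _ : X ⟶ (Arrow.mk f).cechConerve.obj n) φ
      ((CosimplicialObject.cechConerve.map
        (Arrow.homMk φ ψ h.w.symm : Arrow.mk f ⟶ Arrow.mk f')).app n)
      (WidePushout.head _ : X' ⟶ (Arrow.mk f').cechConerve.obj n) := by
    constructor
    dsimp
    erw [WidePushout.head_desc]; rfl
  have key : ∀ i : Fin (n.len + 1),
      WidePushout.ι (fun _ : Fin (n.len + 1) => f) i ≫
        ((CosimplicialObject.cechConerve.map
          (Arrow.homMk φ ψ h.w.symm : Arrow.mk f ⟶ Arrow.mk f')).app n) =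
      ψ ≫ WidePushout.ι (fun _ : Fin (n.len + 1) => f') i := fun i => by
    erw [WidePushout.ι_desc]; rfl
  have keyh :
      WidePushout.head (fun _ : Fin (n.len + 1) => f) ≫
        ((CosimplicialObject.cechConerve.map
          (Arrow.homMk φ ψ h.w.symm : Arrow.mk f ⟶ Arrow.mk f')).app n) =
      φ ≫ WidePushout.head (fun _ : Fin (n.len + 1) => f') := by
    erw [WidePushout.head_desc]; rfl
  apply IsPushout.of_isColimit' w
  apply PushoutCocone.IsColimit.mk _ (fun s =>
    WidePushout.desc s.inr
      (fun i => h.desc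
        (WidePushout.ι (fun _ : Fin (n.len + 1) => f) i ≫ s.inl) s.inr
        (by
          rw [← Category.assoc,
            show f ≫ WidePushout.ι (fun _ : Fin (n.len + 1) => f) i =
              WidePushout.head _ from WidePushout.arrow_ι (fun _ : Fin (n.len + 1) => f) i]
          exact s.condition))
      (fun i => h.inr_desc _ _ _))
  · intro s
    apply WidePushout.hom_ext
    · intro i
      erw [← Category.assoc]
      erw [key i]
      rw [Category.assoc]
      erw [WidePushout.ι_desc]
      exact h.inl_desc _ _ _
    · erw [← Category.assoc]
      erw [keyh]
      rw [Category.assoc]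
      erw [WidePushout.head_desc]
      exact s.condition.symm
  · intro s
    erw [WidePushout.head_desc]
  · intro s m hm₁ hm₂
    apply WidePushout.hom_ext
    · intro i
      apply h.hom_ext
      · conv_lhs => erw [← Category.assoc]; erw [← key i]; erw [Category.assoc, hm₁]
        conv_rhs => erw [WidePushout.ι_desc]; rw [h.inl_desc]
      · conv_lhs =>
          rw [← Category.assoc]
          erw [show f' ≫ WidePushout.ι (fun _ : Fin (n.len + 1) => f') i =
            WidePushout.head _ from WidePushout.arrow_ι (fun _ : Fin (n.len + 1) => f') i]
          erw [hm₂]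
        conv_rhs => erw [WidePushout.ι_desc]; rw [h.inr_desc]
    · conv_rhs => erw [WidePushout.head_desc]
      exact hm₂
end

section
/- Let Fin∗ denote the category of finite pointed sets, and call a morphism f : S → T of finite pointed sets active if the preimage of the basepoint of T is exactly the basepoint of S. For every finite pointed set S, there is an equivalence of categories between the over-category (Fin∗)_{/S} and the product (∏_{s ∈ S∖{∗}} (Fin∗)^{act}_{/⟨1⟩}) × Fin∗, where (Fin∗)^{act}_{/⟨1⟩} is the full subcategory of the over-category (Fin∗)_{/⟨1⟩} spanned by the active morphisms to the two-element pointed set ⟨1⟩ = {∗, 1}. The equivalence sends a morphism g : T → S to the tuple consisting of, for each non-basepoint s ∈ S, the induced active map g⁻¹({s})₊ → ⟨1⟩, together with the fiber g⁻¹({∗}) over the basepoint. -/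
open CategoryTheory

/-- The category `Fin∗` of finite pointed sets. -/
structure FinPtd : Type 1 where
  X : Type
  [fin : Fintype X]
  pt : X

attribute [instance] FinPtd.fin

instance : Category FinPtd where
  Hom A B := {f : A.X → B.X // f A.pt = B.pt}
  id A := ⟨id, rfl⟩
  comp f g := ⟨g.1 ∘ f.1, by simp [f.2, g.2]⟩
  id_comp f := Subtype.ext rfl
  comp_id f := Subtype.ext rfl
  assoc f g h := Subtype.ext rfl

/-- A morphism of pointed sets is active if the preimage of the basepoint is exactly the
basepoint. -/
def IsActive {A B : FinPtd} (f : A ⟶ B) : Prop := ∀ a, f.1 a = B.pt ↔ a = A.pt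

/-- The two-element pointed set `⟨1⟩ = {∗, 1}`. -/
def one : FinPtd := { X := Option PUnit, pt := none }

/-- The full subcategory of `(Fin∗)_{/⟨1⟩}` spanned by the active morphisms to `⟨1⟩`. -/
def ActOver : Type 1 := ObjectProperty.FullSubcategory (fun u : Over one => IsActive u.hom)

instance : Category ActOver := ObjectProperty.FullSubcategory.category _

/-- For `g : T → S` and `s ∈ S`, the pointed set `g⁻¹({s})₊`. -/
noncomputable def fiberPlus (S : FinPtd) (g : Over S) (s : S.X) : FinPtd :=
  letI : DecidablePred fun t : g.left.X => g.hom.1 t = s := Classical.decPred _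
  { X := Option {t : g.left.X // g.hom.1 t = s}, pt := none }

/-- The induced active map `g⁻¹({s})₊ → ⟨1⟩`. -/
noncomputable def toOne (S : FinPtd) (g : Over S) (s : S.X) : fiberPlus S g s ⟶ one :=
  ⟨fun t => t.map fun _ => PUnit.unit, rfl⟩

theorem toOne_active (S : FinPtd) (g : Over S) (s : S.X) : IsActive (toOne S g s) := by
  intro a
  cases a <;> simp [toOne, one, fiberPlus]

/-- The fiber `g⁻¹({∗})` over the basepoint, pointed by the basepoint of the source. -/
noncomputable def basepointFiber (S : FinPtd) (g : Over S) : FinPtd :=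
  letI : DecidablePred fun t : g.left.X => g.hom.1 t = S.pt := Classical.decPred _
  { X := {t : g.left.X // g.hom.1 t = S.pt}, pt := ⟨g.left.pt, g.hom.2⟩ }

/-- The tuple `((g⁻¹({s})₊ → ⟨1⟩)_{s ≠ ∗}, g⁻¹({∗}))` associated to `g : T → S`. -/
noncomputable def objTuple (S : FinPtd) (g : Over S) :
    ({s : S.X // s ≠ S.pt} → ActOver) × FinPtd :=
  (fun s => ⟨Over.mk (toOne S g s.1), toOne_active S g s.1⟩, basepointFiber S g)


noncomputable section Aux
open scoped Classical

variable (S : FinPtd)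

/-- Underlying pointed set of the inverse construction. -/
def GLeft (p : ({s : S.X // s ≠ S.pt} → ActOver) × FinPtd) : FinPtd where
  X := (Σ s : {s : S.X // s ≠ S.pt}, {x : ((p.1 s).obj.left).X // x ≠ ((p.1 s).obj.left).pt})
        ⊕ p.2.X
  pt := Sum.inr p.2.pt

def Gobj (p : ({s : S.X // s ≠ S.pt} → ActOver) × FinPtd) : Over S :=
  Over.mk (X := S) (Y := GLeft S p)
    ⟨fun t => Sum.elim (fun q => q.1.1) (fun _ => S.pt) t, rfl⟩

/-- Forward functor on morphisms. -/
def Fmap {g g' : Over S} (h : g ⟶ g') : objTuple S g ⟶ objTuple S g' :=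
  ( fun s => InducedCategory.homMk <| Over.homMk
      (⟨Option.map (fun t => ⟨h.left.1 t.1,
          (congrArg (fun k => k.1 t.1) (Over.w h)).trans t.2⟩), rfl⟩ :
        fiberPlus S g s.1 ⟶ fiberPlus S g' s.1)
      (Subtype.ext (funext fun t => by cases t <;> rfl)),
    ⟨fun t => ⟨h.left.1 t.1, (congrArg (fun k => k.1 t.1) (Over.w h)).trans t.2⟩,
      Subtype.ext h.left.2⟩ )

def Ffun : Over S ⥤ ({s : S.X // s ≠ S.pt} → ActOver) × FinPtd where
  obj := objTuple S
  map := Fmap S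
  map_id g := by
    refine Prod.ext (funext fun s => ?_) (Subtype.ext (funext fun t => rfl))
    apply InducedCategory.Hom.ext
    apply CommaMorphism.ext
    · exact Subtype.ext (funext fun t => by cases t <;> rfl)
    · rfl
  map_comp {a b c} f g := by
    refine Prod.ext (funext fun s => ?_) (Subtype.ext (funext fun t => rfl))
    apply InducedCategory.Hom.ext
    apply CommaMorphism.ext
    · exact Subtype.ext (funext fun t => by cases t <;> rfl)
    · rfl

lemma act_map_ne {u v : ActOver} (f : u ⟶ v) {x : u.obj.left.X}
    (hx : x ≠ u.obj.left.pt) : f.hom.left.1 x ≠ v.obj.left.pt := by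
  intro h
  apply hx
  have h1 : v.obj.hom.1 (f.hom.left.1 x) = one.pt := (v.property _).2 h
  have h2 : v.obj.hom.1 (f.hom.left.1 x) = u.obj.hom.1 x :=
    congrArg (fun k => k.1 x) (Over.w f.hom)
  exact (u.property x).1 (h2.symm.trans h1)

/-- Backward functor on morphisms. -/
def Gmap {p q : ({s : S.X // s ≠ S.pt} → ActOver) × FinPtd} (φ : p ⟶ q) :
    Gobj S p ⟶ Gobj S q :=
  Over.homMk
    (⟨Sum.map (fun z => ⟨z.1, ⟨(φ.1 z.1).hom.left.1 z.2.1, act_map_ne (φ.1 z.1) z.2.2⟩⟩)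
        φ.2.1,
      congrArg Sum.inr φ.2.2⟩ : GLeft S p ⟶ GLeft S q)
    (Subtype.ext (funext fun t => by cases t <;> rfl))

def Gfun : ({s : S.X // s ≠ S.pt} → ActOver) × FinPtd ⥤ Over S where
  obj := Gobj S
  map := Gmap S
  map_id p := by
    apply CommaMorphism.ext
    · exact Subtype.ext (funext fun t => by rcases t with ⟨s, x, hx⟩ | b <;> rfl)
    · rfl
  map_comp {a b c} f g := by
    apply CommaMorphism.ext
    · exact Subtype.ext (funext fun t => by rcases t with ⟨s, x, hx⟩ | b <;> rfl)
    · rfl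

def mkIso {A B : FinPtd} (e : A.X ≃ B.X) (h : e A.pt = B.pt) : A ≅ B where
  hom := ⟨e, h⟩
  inv := ⟨e.symm, by rw [← h]; exact e.symm_apply_apply _⟩
  hom_inv_id := Subtype.ext (funext fun a => e.symm_apply_apply a)
  inv_hom_id := Subtype.ext (funext fun b => e.apply_symm_apply b)

def unitTo (g : Over S) : g.left.X → (GLeft S (objTuple S g)).X :=
  fun t => if h : g.hom.1 t = S.pt then Sum.inr (⟨t, h⟩ : (basepointFiber S g).X)
    else Sum.inl ⟨⟨g.hom.1 t, h⟩, ⟨some ⟨t, rfl⟩, Option.some_ne_none _⟩⟩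

def unitInv (g : Over S) : (GLeft S (objTuple S g)).X → g.left.X :=
  fun t => match t with
  | Sum.inl ⟨_, x, hx⟩ => (x.get (Option.ne_none_iff_isSome.mp hx)).1
  | Sum.inr b => b.1

def unitEquiv (g : Over S) : g.left.X ≃ (GLeft S (objTuple S g)).X where
  toFun := unitTo S g
  invFun := unitInv S g
  left_inv t := by
    by_cases h : g.hom.1 t = S.pt
    · erw [unitTo, dif_pos h]; rfl
    · erw [unitTo, dif_neg h]; rfl
  right_inv t := by
    rcases t with ⟨⟨s, hs⟩, x, hx⟩ | ⟨b, hb⟩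
    · rcases x with _ | ⟨t, ht⟩
      · exact absurd rfl hx
      · dsimp at ht
        subst ht
        show unitTo S g t = _
        erw [unitTo, dif_neg hs]
    · show unitTo S g b = _
      erw [unitTo, dif_pos hb]

lemma unit_inl_congr (g : Over S) {s s' : S.X} (hss : s = s') (hs : s ≠ S.pt)
    (hs' : s' ≠ S.pt) (t0 : g.left.X) (p : g.hom.1 t0 = s) (p' : g.hom.1 t0 = s')
    (q : (some ⟨t0, p⟩ : (fiberPlus S g s).X) ≠ (fiberPlus S g s).pt)
    (q' : (some ⟨t0, p'⟩ : (fiberPlus S g s').X) ≠ (fiberPlus S g s').pt) :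
    (Sum.inl ⟨⟨s, hs⟩, ⟨some ⟨t0, p⟩, q⟩⟩ : (GLeft S (objTuple S g)).X)
      = Sum.inl ⟨⟨s', hs'⟩, ⟨some ⟨t0, p'⟩, q'⟩⟩ := by
  subst hss; rfl

def unitIsoComp (g : Over S) : g ≅ (Gfun S).obj ((Ffun S).obj g) :=
  Over.isoMk (mkIso (unitEquiv S g) (by
      show unitTo S g g.left.pt = _
      rw [unitTo]
      exact dif_pos g.hom.2))
    (Subtype.ext (funext fun t => by
      show Sum.elim _ _ (unitTo S g t) = g.hom.1 t
      by_cases h : g.hom.1 t = S.pt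
      · erw [unitTo, dif_pos h]; exact h.symm
      · erw [unitTo, dif_neg h]; rfl))

def unitIso : 𝟭 (Over S) ≅ Ffun S ⋙ Gfun S :=
  NatIso.ofComponents (unitIsoComp S) (by
    intro X Y f
    apply CommaMorphism.ext
    · apply Subtype.ext
      funext t
      show unitTo S Y (f.left.1 t) = (Gmap S (Fmap S f)).left.1 (unitTo S X t)
      have hw : Y.hom.1 (f.left.1 t) = X.hom.1 t := congrArg (fun k => k.1 t) (Over.w f)
      by_cases h : X.hom.1 t = S.pt
      · erw [unitTo, unitTo, dif_pos h, dif_pos (hw.trans h)]; rfl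
      · erw [unitTo, unitTo, dif_neg h, dif_neg (hw.trans_ne h)]
        exact unit_inl_congr S Y hw _ h (f.left.1 t) rfl hw (Option.some_ne_none _)
          (Option.some_ne_none _)
    · rfl)

lemma optPUnit {o : Option PUnit} (h : o ≠ none) : o = some PUnit.unit := by
  rcases o with _ | ⟨⟨⟩⟩
  · exact absurd rfl h
  · rfl

variable {S} in
/-- Map `(Gobj p)⁻¹(s)₊ → (p.1 s)` -/
def cHomFun (p : ({s : S.X // s ≠ S.pt} → ActOver) × FinPtd) (s : {s : S.X // s ≠ S.pt}) :
    (fiberPlus S (Gobj S p) s.1).X → ((p.1 s).obj.left).X :=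
  fun o => match o with
  | none => (p.1 s).obj.left.pt
  | some ⟨Sum.inl ⟨s', x⟩, h⟩ => ((Subtype.ext h : s' = s) ▸ x).1
  | some ⟨Sum.inr _, h⟩ => (s.2 h.symm).elim

def cHom (p : ({s : S.X // s ≠ S.pt} → ActOver) × FinPtd) (s : {s : S.X // s ≠ S.pt}) :
    ((Ffun S).obj ((Gfun S).obj p)).1 s ⟶ p.1 s :=
  InducedCategory.homMk <| Over.homMk (⟨cHomFun p s, rfl⟩ : fiberPlus S (Gobj S p) s.1 ⟶ (p.1 s).obj.left)
    (Subtype.ext (funext fun o => by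
      rcases o with _ | ⟨⟨s', x⟩ | b, h⟩
      · exact (p.1 s).obj.hom.2
      · obtain rfl : s' = s := Subtype.ext h
        show (p.1 s').obj.hom.1 x.1 = _
        exact optPUnit fun c => x.2 (((p.1 s').property x.1).1 c)
      · exact (s.2 h.symm).elim))

def cInv (p : ({s : S.X // s ≠ S.pt} → ActOver) × FinPtd) (s : {s : S.X // s ≠ S.pt}) :
    p.1 s ⟶ ((Ffun S).obj ((Gfun S).obj p)).1 s :=
  InducedCategory.homMk <| Over.homMk (⟨fun y => if hy : y = (p.1 s).obj.left.pt then none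
      else some ⟨Sum.inl ⟨s, ⟨y, hy⟩⟩, rfl⟩, dif_pos rfl⟩ :
      (p.1 s).obj.left ⟶ fiberPlus S (Gobj S p) s.1)
    (Subtype.ext (funext fun y => by
      show (toOne S (Gobj S p) s.1).1 (if hy : y = (p.1 s).obj.left.pt then none
        else some ⟨Sum.inl ⟨s, ⟨y, hy⟩⟩, rfl⟩) = (p.1 s).obj.hom.1 y
      by_cases hy : y = (p.1 s).obj.left.pt
      · erw [dif_pos hy]
        exact (((p.1 s).property y).2 hy).symm
      · erw [dif_neg hy]
        exact (optPUnit fun c => hy (((p.1 s).property y).1 c)).symm))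

def bHom (p : ({s : S.X // s ≠ S.pt} → ActOver) × FinPtd) :
    basepointFiber S (Gobj S p) ⟶ p.2 :=
  ⟨fun t => match t with
    | ⟨Sum.inl z, h⟩ => (z.1.2 h).elim
    | ⟨Sum.inr b, _⟩ => b, rfl⟩

def bInv (p : ({s : S.X // s ≠ S.pt} → ActOver) × FinPtd) :
    p.2 ⟶ basepointFiber S (Gobj S p) :=
  ⟨fun b => ⟨Sum.inr b, rfl⟩, Subtype.ext rfl⟩

def counitIsoComp (p : ({s : S.X // s ≠ S.pt} → ActOver) × FinPtd) :
    (Ffun S).obj ((Gfun S).obj p) ≅ p where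
  hom := (fun s => cHom S p s, bHom S p)
  inv := (fun s => cInv S p s, bInv S p)
  hom_inv_id := by
    refine Prod.ext (funext fun s => ?_) (Subtype.ext (funext fun t => ?_))
    · apply InducedCategory.Hom.ext
      apply CommaMorphism.ext
      · apply Subtype.ext
        funext o
        rcases o with _ | ⟨⟨s', x⟩ | b, h⟩
        · exact dif_pos rfl
        · obtain rfl : s' = s := Subtype.ext h
          exact dif_neg x.2
        · exact (s.2 h.symm).elim
      · rfl
    · rcases t with ⟨(⟨z, hz⟩ | b), h⟩
      · exact (z.2 h).elim
      · rfl
  inv_hom_id := by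
    refine Prod.ext (funext fun s => ?_) (Subtype.ext (funext fun y => ?_))
    · apply InducedCategory.Hom.ext
      apply CommaMorphism.ext
      · apply Subtype.ext
        funext y
        show cHomFun p s (if hy : y = (p.1 s).obj.left.pt then _ else _) = y
        by_cases hy : y = (p.1 s).obj.left.pt
        · erw [dif_pos hy]; exact hy.symm
        · erw [dif_neg hy]; rfl
      · rfl
    · rfl

def counitIso : Gfun S ⋙ Ffun S ≅ 𝟭 (({s : S.X // s ≠ S.pt} → ActOver) × FinPtd) :=
  NatIso.ofComponents (counitIsoComp S) (by
    intro p q φ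
    refine Prod.ext (funext fun s => ?_) (Subtype.ext (funext fun t => ?_))
    · apply InducedCategory.Hom.ext
      apply CommaMorphism.ext
      · apply Subtype.ext
        funext o
        rcases o with _ | ⟨⟨s', x⟩ | b, h⟩
        · exact ((φ.1 s).hom.left.2).symm
        · obtain rfl : s' = s := Subtype.ext h
          rfl
        · exact (s.2 h.symm).elim
      · rfl
    · rcases t with ⟨(⟨z, hz⟩ | b), h⟩
      · exact (z.2 h).elim
      · rfl)

end Aux

/-- For every finite pointed set `S`, the over-category `(Fin∗)_{/S}` is equivalent to
`(∏_{s ∈ S∖{∗}} (Fin∗)^{act}_{/⟨1⟩}) × Fin∗`, by sending `g : T → S` to the tuple of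
induced active maps `g⁻¹({s})₊ → ⟨1⟩` together with the fiber over the basepoint. -/
theorem over_finPtd_decomposition (S : FinPtd) :
    ∃ E : Over S ≌ ({s : S.X // s ≠ S.pt} → ActOver) × FinPtd,
      ∀ g : Over S, E.functor.obj g = objTuple S g :=
  ⟨CategoryTheory.Equivalence.mk (Ffun S) (Gfun S) (unitIso S) (counitIso S), fun _ => rfl⟩
end
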